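/- arXiv:2206.03329 — 2 statements merged into one kernel-verified Lean document; each statement's English description precedes it below -/
import Mathlib

section
/- Let ∇U: ℝ^d → ℝ^d satisfy ⟨x, ∇U(x)⟩ ≥ r‖x‖^{1−q} and ‖∇U(x)‖ ≤ ‖x‖^{β} for all ‖x‖ ≥ M, where q ∈ (0,1), r > 0, β ≤ (1−q)/2, M ≥ 1. Set Φ(x) = x − Δ∇U(x) for a step size Δ > 0 satisfying Δ ≤ r if β = (1−q)/2 (no restriction if β < (1−q)/2, provided M is large enough that Δ‖x‖^{2β} ≤ r‖x‖^{1-q} for ‖x‖≥M). Then for all ‖x‖ ≥ M, ‖Φ(x)‖ ≤ ‖x‖ (1 − (rΔ/2) ‖x‖^{−(1+q)}). -/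
open scoped RealInnerProductSpace

theorem stmt_6 {d : ℕ} (q r β Δ M : ℝ) (hq0 : 0 < q) (hq1 : q < 1) (hr : 0 < r)
    (hβ : β ≤ (1 - q) / 2) (hΔ : 0 < Δ) (hM : 1 ≤ M)
    (gradU : EuclideanSpace ℝ (Fin d) → EuclideanSpace ℝ (Fin d))
    (hinner : ∀ x, M ≤ ‖x‖ → r * ‖x‖ ^ (1 - q) ≤ ⟪x, gradU x⟫)
    (hnorm : ∀ x, M ≤ ‖x‖ → ‖gradU x‖ ≤ ‖x‖ ^ β)
    (hprov : ∀ x : EuclideanSpace ℝ (Fin d), M ≤ ‖x‖ →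
      Δ * ‖x‖ ^ (2 * β) ≤ r * ‖x‖ ^ (1 - q))
    (ht : ∀ x : EuclideanSpace ℝ (Fin d), M ≤ ‖x‖ →
      Δ * r * ‖x‖ ^ (-(1 + q)) ≤ 1) :
    ∀ x, M ≤ ‖x‖ →
      ‖x - Δ • gradU x‖ ≤ ‖x‖ * (1 - (r * Δ / 2) * ‖x‖ ^ (-(1 + q))) := by
  intro x hx
  have hx1 : (1:ℝ) ≤ ‖x‖ := le_trans hM hx
  have hxpos : (0:ℝ) < ‖x‖ := lt_of_lt_of_le one_pos hx1
  set g := gradU x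
  -- expand square
  have hexp : ‖x - Δ • g‖ ^ 2 = ‖x‖ ^ 2 - 2 * (Δ * ⟪x, g⟫) + Δ ^ 2 * ‖g‖ ^ 2 := by
    rw [norm_sub_sq_real, real_inner_smul_right, norm_smul, Real.norm_eq_abs,
      abs_of_pos hΔ, mul_pow]
  have hg2 : ‖g‖ ^ 2 ≤ ‖x‖ ^ (2 * β) := by
    have h1 : ‖g‖ ^ 2 ≤ (‖x‖ ^ β) ^ 2 :=
      pow_le_pow_left₀ (norm_nonneg g) (hnorm x hx) 2
    have h2 : (‖x‖ ^ β) ^ 2 = ‖x‖ ^ (2 * β) := by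
      rw [← Real.rpow_natCast (‖x‖ ^ β) 2, ← Real.rpow_mul (norm_nonneg x)]
      norm_num [mul_comm]
    linarith
  have hpow : ‖x‖ ^ 2 * ‖x‖ ^ (-(1 + q)) = ‖x‖ ^ (1 - q) := by
    rw [← Real.rpow_natCast ‖x‖ 2, ← Real.rpow_add hxpos]
    norm_num
    congr 1
    ring
  have hineq : ‖x - Δ • g‖ ^ 2 ≤ ‖x‖ ^ 2 - Δ * r * ‖x‖ ^ (1 - q) := by
    have h1 := hinner x hx
    have h2 := hprov x hx
    have h3 : Δ ^ 2 * ‖g‖ ^ 2 ≤ Δ * (r * ‖x‖ ^ (1 - q)) := by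
      calc Δ ^ 2 * ‖g‖ ^ 2 ≤ Δ ^ 2 * ‖x‖ ^ (2 * β) := by
            exact mul_le_mul_of_nonneg_left hg2 (by positivity)
        _ = Δ * (Δ * ‖x‖ ^ (2 * β)) := by ring
        _ ≤ Δ * (r * ‖x‖ ^ (1 - q)) := mul_le_mul_of_nonneg_left h2 hΔ.le
    nlinarith
  set c := (r * Δ / 2) * ‖x‖ ^ (-(1 + q)) with hc
  have hcpos : 0 < c := by positivity
  have hc1 : 2 * c ≤ 1 := by
    have := ht x hx
    rw [hc]; nlinarith
  have hRHSpos : 0 ≤ ‖x‖ * (1 - c) := by nlinarith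
  have hRHSsq : ‖x‖ ^ 2 - Δ * r * ‖x‖ ^ (1 - q) ≤ (‖x‖ * (1 - c)) ^ 2 := by
    have key : Δ * r * ‖x‖ ^ (1 - q) = ‖x‖ ^ 2 * (2 * c) := by
      rw [hc, ← hpow]; ring
    nlinarith [sq_nonneg (‖x‖ * c), sq_nonneg ‖x‖]
  nlinarith [norm_nonneg (x - Δ • g), hineq, hRHSsq]
end

section
/- Let A₁,…,A_n be symmetric d×d real matrices, q₁ > q₂ > ⋯ > q_n in [−1,1), α_i > 0, and suppose there exists k₀ ∈ {1,…,n} with λ_max(A_{k₀}) < 0 and λ_max(A_k) = 0 for all k > k₀. Define b(x) = Σ_{i=1}^n A_i x (α_i + ‖x‖)^{−(q_i+1)}. Then there exist M₀ > 0 and r > 0 such that for all x with ‖x‖ ≥ M₀, ⟨b(x), x/‖x‖⟩ ≤ −r‖x‖^{−q_{k₀}}. -/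
open Matrix

theorem stmt_8 {d n : ℕ} (A : Fin n → Matrix (Fin d) (Fin d) ℝ)
    (hsym : ∀ i, (A i).IsSymm)
    (q : Fin n → ℝ) (hqmono : ∀ i j : Fin n, i < j → q j < q i)
    (hqr : ∀ i, -1 ≤ q i ∧ q i < 1)
    (α : Fin n → ℝ) (hα : ∀ i, 0 < α i)
    (lmax : Fin n → ℝ)
    (hCF : ∀ k (v : Fin d → ℝ), v ⬝ᵥ (A k).mulVec v ≤ lmax k * (v ⬝ᵥ v))
    (k₀ : Fin n) (hneg : lmax k₀ < 0) (hzero : ∀ k, k₀ < k → lmax k = 0) :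
    ∃ M₀ > (0 : ℝ), ∃ r > (0 : ℝ), ∀ x : Fin d → ℝ, M₀ ≤ Real.sqrt (x ⬝ᵥ x) →
      ((∑ i, (α i + Real.sqrt (x ⬝ᵥ x)) ^ (-(q i + 1)) • (A i).mulVec x) ⬝ᵥ x)
          / Real.sqrt (x ⬝ᵥ x)
        ≤ -r * Real.sqrt (x ⬝ᵥ x) ^ (-(q k₀)) := by
  classical
  set c := -lmax k₀ with hc_def
  have hc : 0 < c := by simp only [hc_def]; linarith
  set b : ℝ := c / (8 * ((n : ℝ) + 1)) with hb_def
  have hbpos : 0 < b := by positivity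
  -- eventual smallness of lower order terms
  have hev : ∀ᶠ s in Filter.atTop, ∀ i : Fin n, i < k₀ →
      max (lmax i) 0 * s ^ (q k₀ - q i) ≤ b := by
    rw [Filter.eventually_all]
    intro i
    by_cases hi : i < k₀
    · have hlt : 0 < q i - q k₀ := by
        have := hqmono i k₀ hi; linarith
      have h0 : Filter.Tendsto (fun s : ℝ => max (lmax i) 0 * s ^ (q k₀ - q i))
          Filter.atTop (nhds 0) := by
        have := (tendsto_rpow_neg_atTop hlt).const_mul (max (lmax i) 0)
        simpa [mul_zero, show -(q i - q k₀) = q k₀ - q i by ring] using this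
      exact (h0.eventually (ge_mem_nhds hbpos)).mono fun s hs _ => hs
    · exact Filter.Eventually.of_forall fun s hik => absurd hik hi
  obtain ⟨M, hM⟩ := Filter.eventually_atTop.mp hev
  refine ⟨max M (max (α k₀) 1), lt_of_lt_of_le one_pos (le_trans (le_max_right _ _) (le_max_right _ _)),
    c / 8, by positivity, ?_⟩
  intro x hx
  set s : ℝ := Real.sqrt (x ⬝ᵥ x) with hs_def
  have hxx0 : 0 ≤ x ⬝ᵥ x := Finset.sum_nonneg fun i _ => mul_self_nonneg _
  have hs1 : 1 ≤ s := le_trans (le_trans (le_max_right _ _) (le_max_right _ _)) hx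
  have hs0 : 0 < s := lt_of_lt_of_le one_pos hs1
  have hsal : α k₀ ≤ s := le_trans (le_trans (le_max_left _ _) (le_max_right _ _)) hx
  have hxx : x ⬝ᵥ x = s ^ 2 := (Real.sq_sqrt hxx0).symm
  have hbound : ∀ i : Fin n, i < k₀ → max (lmax i) 0 * s ^ (q k₀ - q i) ≤ b :=
    hM s (le_trans (le_max_left _ _) hx)
  set T : ℝ := s ^ (1 - q k₀) with hT_def
  have hT0 : 0 ≤ T := Real.rpow_nonneg hs0.le _
  set g : Fin n → ℝ := fun i => if i = k₀ then -(c/4) * T else b * T with hg_def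
  -- key term-by-term bound
  have key : ∀ i : Fin n,
      (α i + s) ^ (-(q i + 1)) * ((A i).mulVec x ⬝ᵥ x) ≤ g i := by
    intro i
    have hcoef : (0:ℝ) < (α i + s) ^ (-(q i + 1)) :=
      Real.rpow_pos_of_pos (by linarith [hα i]) _
    have hterm : (A i).mulVec x ⬝ᵥ x = x ⬝ᵥ (A i).mulVec x := dotProduct_comm _ _
    rcases lt_trichotomy i k₀ with hik | hik | hik
    · -- lower order positive terms
      have hne : i ≠ k₀ := ne_of_lt hik
      have h1 : (A i).mulVec x ⬝ᵥ x ≤ max (lmax i) 0 * s ^ 2 := by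
        rw [hterm]
        calc x ⬝ᵥ (A i).mulVec x ≤ lmax i * (x ⬝ᵥ x) := hCF i x
        _ ≤ max (lmax i) 0 * s ^ 2 := by
            rw [hxx]; exact mul_le_mul_of_nonneg_right (le_max_left _ _) (sq_nonneg s)
      have h2 : (α i + s) ^ (-(q i + 1)) ≤ s ^ (-(q i + 1)) := by
        apply Real.rpow_le_rpow_of_nonpos hs0 (by linarith [hα i])
        linarith [(hqr i).1]
      have hL0 : (0:ℝ) ≤ max (lmax i) 0 := le_max_right _ _
      calc (α i + s) ^ (-(q i + 1)) * ((A i).mulVec x ⬝ᵥ x)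
          ≤ (α i + s) ^ (-(q i + 1)) * (max (lmax i) 0 * s ^ 2) :=
            mul_le_mul_of_nonneg_left h1 hcoef.le
        _ ≤ s ^ (-(q i + 1)) * (max (lmax i) 0 * s ^ 2) := by
            apply mul_le_mul_of_nonneg_right h2
            positivity
        _ = max (lmax i) 0 * s ^ (q k₀ - q i) * T := by
            have hs2 : (s:ℝ) ^ (2:ℕ) = s ^ (2:ℝ) := by
              rw [← Real.rpow_natCast s 2]; norm_num
            have hkey : s ^ (-(q i + 1)) * s ^ (2:ℝ) = s ^ (q k₀ - q i) * s ^ (1 - q k₀) := by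
              rw [← Real.rpow_add hs0, ← Real.rpow_add hs0]; ring_nf
            rw [hT_def, hs2]
            linear_combination (max (lmax i) 0) * hkey
        _ ≤ b * T := mul_le_mul_of_nonneg_right (hbound i hik) hT0
        _ = g i := by rw [hg_def]; simp [hne]
    · -- the dominant negative term
      subst hik
      have h1 : (A i).mulVec x ⬝ᵥ x ≤ -c * s ^ 2 := by
        rw [hterm]
        calc x ⬝ᵥ (A i).mulVec x ≤ lmax i * (x ⬝ᵥ x) := hCF i x
        _ = -c * s ^ 2 := by rw [hxx, hc_def]; ring
      have h2 : (1/4 : ℝ) * s ^ (-(q i + 1)) ≤ (α i + s) ^ (-(q i + 1)) := by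
        have e1 : (α i + s) ^ (-(q i + 1)) ≥ (2 * s) ^ (-(q i + 1)) := by
          apply Real.rpow_le_rpow_of_nonpos (by linarith [hα i]) (by linarith)
          linarith [(hqr i).1]
        have e2 : (2 * s) ^ (-(q i + 1)) = (2:ℝ) ^ (-(q i + 1)) * s ^ (-(q i + 1)) :=
          Real.mul_rpow (by norm_num) hs0.le
        have e3 : (1/4 : ℝ) ≤ (2:ℝ) ^ (-(q i + 1)) := by
          have h4 : ((2:ℝ) ^ (-2 : ℝ)) = 1/4 := by
            rw [show (-2:ℝ) = ((-2:ℤ):ℝ) by norm_num, Real.rpow_intCast]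
            norm_num
          rw [← h4]
          exact Real.rpow_le_rpow_of_exponent_le (by norm_num) (by linarith [(hqr i).2])
        calc (1/4:ℝ) * s ^ (-(q i + 1))
            ≤ (2:ℝ) ^ (-(q i + 1)) * s ^ (-(q i + 1)) :=
              mul_le_mul_of_nonneg_right e3 (Real.rpow_nonneg hs0.le _)
          _ = (2 * s) ^ (-(q i + 1)) := e2.symm
          _ ≤ (α i + s) ^ (-(q i + 1)) := e1
      have h3 : s ^ (-(q i + 1)) * s ^ 2 = T := by
        have hs2 : (s:ℝ) ^ (2:ℕ) = s ^ (2:ℝ) := by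
          rw [← Real.rpow_natCast s 2]; norm_num
        rw [hT_def, hs2, ← Real.rpow_add hs0]
        ring_nf
      calc (α i + s) ^ (-(q i + 1)) * ((A i).mulVec x ⬝ᵥ x)
          ≤ (α i + s) ^ (-(q i + 1)) * (-c * s ^ 2) :=
            mul_le_mul_of_nonneg_left h1 hcoef.le
        _ ≤ (1/4 : ℝ) * s ^ (-(q i + 1)) * (-c * s ^ 2) := by
            apply mul_le_mul_of_nonpos_right h2
            have : 0 ≤ c * s ^ 2 := mul_nonneg hc.le (sq_nonneg s)
            linarith
        _ = -(c/4) * (s ^ (-(q i + 1)) * s ^ 2) := by ring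
        _ = g i := by rw [h3, hg_def]; simp
    · -- higher order terms vanish
      have hne : i ≠ k₀ := (ne_of_lt hik).symm
      have h1 : (A i).mulVec x ⬝ᵥ x ≤ 0 := by
        rw [hterm]
        calc x ⬝ᵥ (A i).mulVec x ≤ lmax i * (x ⬝ᵥ x) := hCF i x
        _ = 0 := by rw [hzero i hik]; ring
      calc (α i + s) ^ (-(q i + 1)) * ((A i).mulVec x ⬝ᵥ x)
          ≤ (α i + s) ^ (-(q i + 1)) * 0 := mul_le_mul_of_nonneg_left h1 hcoef.le
        _ = 0 := by ring
        _ ≤ b * T := by positivity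
        _ = g i := by rw [hg_def]; simp [hne]
  -- sum bound
  have hsum_g : ∑ i, g i ≤ -(c/8) * T := by
    have e1 : ∀ i : Fin n, g i = (if i = k₀ then -(c/4) * T - b * T else 0) + b * T := by
      intro i
      by_cases h : i = k₀ <;> simp [hg_def, h]
    rw [Finset.sum_congr rfl fun i _ => e1 i, Finset.sum_add_distrib,
      Finset.sum_ite_eq' Finset.univ k₀, Finset.sum_const, Finset.card_univ,
      Fintype.card_fin]
    simp only [Finset.mem_univ, if_true, nsmul_eq_mul]
    have hnb : (n : ℝ) * b ≤ c / 8 := by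
      have e : ((n:ℝ) + 1) * b = c / 8 := by
        rw [hb_def]; field_simp
      have : (n:ℝ) * b ≤ ((n:ℝ) + 1) * b :=
        mul_le_mul_of_nonneg_right (by linarith) hbpos.le
      linarith
    nlinarith [mul_le_mul_of_nonneg_right hnb hT0, hbpos, hT0]
  have hsum : ((∑ i, (α i + s) ^ (-(q i + 1)) • (A i).mulVec x) ⬝ᵥ x)
      ≤ -(c/8) * T := by
    have hswap : (∑ i, (α i + s) ^ (-(q i + 1)) • (A i).mulVec x) ⬝ᵥ x
        = ∑ i, (α i + s) ^ (-(q i + 1)) * ((A i).mulVec x ⬝ᵥ x) := by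
      simp only [dotProduct, Finset.sum_apply, Pi.smul_apply, smul_eq_mul,
        Finset.mul_sum, Finset.sum_mul, mul_assoc]
      exact Finset.sum_comm
    rw [hswap]
    exact le_trans (Finset.sum_le_sum fun i _ => key i) hsum_g
  have hfin : -(c/8) * T / s = -(c/8) * s ^ (-(q k₀)) := by
    rw [hT_def, mul_div_assoc]
    congr 1
    rw [show (1 : ℝ) - q k₀ = -(q k₀) + 1 by ring, Real.rpow_add_one hs0.ne',
      mul_div_assoc, div_self hs0.ne', mul_one]
  calc ((∑ i, (α i + s) ^ (-(q i + 1)) • (A i).mulVec x) ⬝ᵥ x) / s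
      ≤ -(c/8) * T / s := (div_le_div_iff_of_pos_right hs0).mpr hsum
    _ = -(c/8) * s ^ (-(q k₀)) := hfin
end
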